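/- Let r₀ = r ∈ (0,1) and r_{n} = 2√(r_{n−1})/(1 + r_{n−1}) for n ≥ 1. Then the sequence (r_n) is strictly increasing and converges to 1. -/

import Mathlib

noncomputable def landen (r : ℝ) : ℕ → ℝ
  | 0 => r
  | n + 1 => 2 * Real.sqrt (landen r n) / (1 + landen r n)

lemma landen_step_mem {x : ℝ} (hx : x ∈ Set.Ioo (0:ℝ) 1) :
    2 * Real.sqrt x / (1 + x) ∈ Set.Ioo (0:ℝ) 1 ∧ x < 2 * Real.sqrt x / (1 + x) := by
  obtain ⟨hx0, hx1⟩ := hx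
  have hs0 : 0 < Real.sqrt x := Real.sqrt_pos.mpr hx0
  have hs1 : Real.sqrt x < 1 := by
    rw [show (1:ℝ) = Real.sqrt 1 by simp]
    exact Real.sqrt_lt_sqrt hx0.le hx1
  have hsq : Real.sqrt x ^ 2 = x := Real.sq_sqrt hx0.le
  have hden : (0:ℝ) < 1 + x := by linarith
  refine ⟨⟨by positivity, ?_⟩, ?_⟩
  · rw [div_lt_one hden]
    nlinarith [sq_nonneg (1 - Real.sqrt x)]
  · rw [lt_div_iff₀ hden]
    nlinarith [mul_pos hs0 (mul_pos (sub_pos.mpr hs1) hs0)]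

lemma landen_mem {r : ℝ} (hr : r ∈ Set.Ioo (0:ℝ) 1) (n : ℕ) :
    landen r n ∈ Set.Ioo (0:ℝ) 1 := by
  induction n with
  | zero => exact hr
  | succ n ih => exact (landen_step_mem ih).1

lemma landen_bound {r : ℝ} (hr : r ∈ Set.Ioo (0:ℝ) 1) (n : ℕ) :
    1 - landen r n ≤ (1 - r) ^ (n + 1) := by
  induction n with
  | zero => simp [landen]
  | succ n ih =>
    have hx := landen_mem hr n
    obtain ⟨hx0, hx1⟩ := hx
    set x := landen r n with hxdef
    have hs0 : 0 < Real.sqrt x := Real.sqrt_pos.mpr hx0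
    have hs1 : Real.sqrt x < 1 := by
      rw [show (1:ℝ) = Real.sqrt 1 by simp]
      exact Real.sqrt_lt_sqrt hx0.le hx1
    have hsq : Real.sqrt x ^ 2 = x := Real.sq_sqrt hx0.le
    have hden : (0:ℝ) < 1 + x := by linarith
    have key : 1 - landen r (n + 1) ≤ (1 - x) ^ 2 := by
      show 1 - 2 * Real.sqrt x / (1 + x) ≤ (1 - x) ^ 2
      rw [sub_div' hden.ne', div_le_iff₀ hden]
      nlinarith [sq_nonneg (1 - Real.sqrt x), sq_nonneg (Real.sqrt x),
        mul_nonneg (sq_nonneg (1 - Real.sqrt x)) (sq_nonneg (Real.sqrt x))]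
    have hr1 : (0:ℝ) < 1 - r := by linarith [hr.2]
    have hpow : (1 - r) ^ (n + 1) ≤ 1 - r := by
      apply pow_le_of_le_one hr1.le (by linarith [hr.1]) (Nat.succ_ne_zero n)
    have h1x : 0 ≤ 1 - x := by linarith
    calc 1 - landen r (n + 1) ≤ (1 - x) ^ 2 := key
      _ = (1 - x) * (1 - x) := sq (1 - x) ▸ by ring
      _ ≤ (1 - r) ^ (n + 1) * (1 - r) := by
          apply mul_le_mul ih (le_trans ih hpow) h1x (by positivity)
      _ = (1 - r) ^ (n + 2) := by ring

theorem landen_strictMono_tendsto_one {r : ℝ} (hr : r ∈ Set.Ioo (0 : ℝ) 1) :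
    StrictMono (landen r) ∧
    Filter.Tendsto (landen r) Filter.atTop (nhds 1) := by
  constructor
  · apply strictMono_nat_of_lt_succ
    intro n
    exact (landen_step_mem (landen_mem hr n)).2
  · have hr1 : (0:ℝ) ≤ 1 - r := by linarith [hr.2]
    have hr2 : 1 - r < 1 := by linarith [hr.1]
    have hgeo : Filter.Tendsto (fun n : ℕ => (1 - r) ^ (n + 1)) Filter.atTop (nhds 0) :=
      (tendsto_pow_atTop_nhds_zero_of_lt_one hr1 hr2).comp (Filter.tendsto_add_atTop_nat 1)
    have hsq : Filter.Tendsto (fun n : ℕ => 1 - landen r n) Filter.atTop (nhds 0) := by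
      apply squeeze_zero (fun n => by linarith [(landen_mem hr n).2]) (landen_bound hr) hgeo
    have := hsq.const_sub 1
    simpa using this
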